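/- Let ‖·‖ be a norm on ℝ^2 and let P be a 2-polytope (convex polygon) that is subequilateral with respect to ‖·‖. Then P is equilateral with respect to ‖·‖: the distance in ‖·‖ between any two distinct vertices of P equals the diameter of P. -/

import Mathlib

open Pointwise

/-- `N` is a norm on the real vector space `E`. -/
def IsNorm {E : Type*} [AddCommGroup E] [Module ℝ E] (N : E → ℝ) : Prop :=
  (∀ x, N x = 0 ↔ x = 0) ∧ (∀ (a : ℝ) (x : E), N (a • x) = |a| * N x) ∧
  (∀ x y, N (x + y) ≤ N x + N y)

/-- The segment `[x, y]` is an edge (a 1-dimensional face) of `P`. -/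
def IsEdge {E : Type*} [AddCommGroup E] [Module ℝ E] (P : Set E) (x y : E) : Prop :=
  x ≠ y ∧ IsExtreme ℝ P (segment ℝ x y)

/-- The diameter of a set `P` with respect to the norm `N`. -/
noncomputable def polyDiam {E : Type*} [AddCommGroup E] (N : E → ℝ) (P : Set E) : ℝ :=
  sSup {r | ∃ x ∈ P, ∃ y ∈ P, N (x - y) = r}

/-- The minimum pairwise distance of a finite set `V` with respect to the norm `N`. -/
noncomputable def minPairDist {E : Type*} [AddCommGroup E] (N : E → ℝ) (V : Finset E) : ℝ :=
  sInf {r | ∃ x ∈ V, ∃ y ∈ V, x ≠ y ∧ N (x - y) = r}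

/-- The functional `λ(V; N) = diam(V) / min pairwise distance`. -/
noncomputable def lamV {E : Type*} [AddCommGroup E] (N : E → ℝ) (V : Finset E) : ℝ :=
  polyDiam N (V : Set E) / minPairDist N V

/-- `P` is subequilateral with respect to `N`: every edge has length the diameter of `P`. -/
def Subequilateral {E : Type*} [AddCommGroup E] [Module ℝ E] (N : E → ℝ) (P : Set E) : Prop :=
  ∀ x y, IsEdge P x y → N (x - y) = polyDiam N P

/-- There are two parallel hyperplanes, one through `x` and one through `y`, such that `P`
lies in the closed slab bounded by them. -/
def InSlab {E : Type*} [AddCommGroup E] [Module ℝ E] (P : Set E) (x y : E) : Prop :=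
  ∃ f : E →ₗ[ℝ] ℝ, f ≠ 0 ∧ ∀ z ∈ P, min (f x) (f y) ≤ f z ∧ f z ≤ max (f x) (f y)

/-- `P` is edge-antipodal. -/
def EdgeAntipodal {E : Type*} [AddCommGroup E] [Module ℝ E] (P : Set E) : Prop :=
  ∀ x y, IsEdge P x y → InSlab P x y

/-- `P` is antipodal. -/
def Antipodal {E : Type*} [AddCommGroup E] [Module ℝ E] (P : Set E) : Prop :=
  ∀ x ∈ Set.extremePoints ℝ P, ∀ y ∈ Set.extremePoints ℝ P, x ≠ y → InSlab P x y

/-- The relative norm determined by `P`, i.e. the norm with unit ball `P - P`. -/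
noncomputable def relNorm {E : Type*} [AddCommGroup E] [Module ℝ E] (P : Set E) : E → ℝ :=
  gauge (P - P)


section AuxSub



variable {E : Type*} [AddCommGroup E] [Module ℝ E] {N : E → ℝ}

lemma IsNorm.smul_eq (hN : IsNorm N) (a : ℝ) (x : E) : N (a • x) = |a| * N x := hN.2.1 a x

lemma IsNorm.neg_eq (hN : IsNorm N) (x : E) : N (-x) = N x := by
  have := hN.2.1 (-1) x; simpa using this

lemma IsNorm.sub_comm (hN : IsNorm N) (x y : E) : N (x - y) = N (y - x) := by
  rw [← hN.neg_eq (x - y)]; congr 1; abel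

lemma IsNorm.triangle' (hN : IsNorm N) (x y z : E) : N (x - y) ≤ N (x - z) + N (z - y) := by
  have := hN.2.2 (x - z) (z - y)
  have h : x - y = (x - z) + (z - y) := by abel
  rw [h]; exact this

lemma IsNorm.convex_comb (hN : IsNorm N) {a b : ℝ} (ha : 0 ≤ a) (hb : 0 ≤ b) (x y : E) :
    N (a • x + b • y) ≤ a * N x + b * N y := by
  calc N (a • x + b • y) ≤ N (a • x) + N (b • y) := hN.2.2 _ _
  _ = a * N x + b * N y := by rw [hN.2.1, hN.2.1, abs_of_nonneg ha, abs_of_nonneg hb]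


lemma hull_pair_bound (hN : IsNorm N) (V : Finset E) {M : ℝ}
    (hpair : ∀ a ∈ V, ∀ b ∈ V, N (a - b) ≤ M)
    {x y : E} (hx : x ∈ convexHull ℝ (V : Set E)) (hy : y ∈ convexHull ℝ (V : Set E)) :
    N (x - y) ≤ M := by
  have key : ∀ b : E, (∀ a ∈ V, N (a - b) ≤ M) → ∀ z ∈ convexHull ℝ (V : Set E), N (z - b) ≤ M := by
    intro b hb z hz
    have hC : Convex ℝ {z : E | N (z - b) ≤ M} := by
      intro z1 h1 z2 h2 a a' ha ha' haa
      have heq : a • z1 + a' • z2 - b = a • (z1 - b) + a' • (z2 - b) := by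
        rw [smul_sub, smul_sub]
        rw [show a • z1 - a • b + (a' • z2 - a' • b) = a • z1 + a' • z2 - (a • b + a' • b) by abel,
          ← add_smul, haa, one_smul]
      have := hN.convex_comb ha ha' (z1 - b) (z2 - b)
      simp only [Set.mem_setOf_eq] at h1 h2 ⊢
      rw [heq]
      calc N (a • (z1 - b) + a' • (z2 - b)) ≤ a * N (z1 - b) + a' * N (z2 - b) := this
        _ ≤ a * M + a' * M := by
            apply add_le_add <;> apply mul_le_mul_of_nonneg_left <;> assumption
        _ = M := by rw [← add_mul, haa, one_mul]
    exact convexHull_min (fun a ha => hb a ha) hC hz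
  -- first: ∀ a ∈ V, N (x - a) ≤ M, i.e. sub_comm of key
  have step1 : ∀ a ∈ V, N (x - a) ≤ M := by
    intro a ha
    exact key a (fun a' ha' => hpair a' ha' a ha) x hx
  -- now for y: N (x - y) = N (y - x) and apply key with b := x? need ∀ a ∈ V, N (a - x) ≤ M
  have := key x (fun a ha => by rw [hN.sub_comm]; exact step1 a ha) y hy
  rwa [hN.sub_comm]

lemma dist_le_polyDiam (hN : IsNorm N) (V : Finset E) (hV : V.Nonempty)
    {x y : E} (hx : x ∈ convexHull ℝ (V : Set E)) (hy : y ∈ convexHull ℝ (V : Set E)) :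
    N (x - y) ≤ polyDiam N (convexHull ℝ (V : Set E)) := by
  obtain ⟨M, hM⟩ : ∃ M, ∀ a ∈ V, ∀ b ∈ V, N (a - b) ≤ M := by
    refine ⟨(V ×ˢ V).sup' (hV.product hV) fun p => N (p.1 - p.2), fun a ha b hb => ?_⟩
    exact Finset.le_sup' (f := fun p : E × E => N (p.1 - p.2)) (b := (a, b)) (Finset.mem_product.2 ⟨ha, hb⟩)
  apply le_csSup
  · exact ⟨M, by rintro r ⟨a, ha, b, hb, rfl⟩; exact hull_pair_bound hN V hM ha hb⟩
  · exact ⟨x, hx, y, hy, rfl⟩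

end AuxSub

section AuxPlane


noncomputable def cross2 (u w : Fin 2 → ℝ) : (Fin 2 → ℝ) →L[ℝ] ℝ :=
  (w 1 - u 1) • (ContinuousLinearMap.proj (R := ℝ) (φ := fun _ : Fin 2 => ℝ) 0)
    - (w 0 - u 0) • (ContinuousLinearMap.proj (R := ℝ) (φ := fun _ : Fin 2 => ℝ) 1)

lemma cross2_apply (u w z : Fin 2 → ℝ) :
    cross2 u w z = (w 1 - u 1) * z 0 - (w 0 - u 0) * z 1 := by
  simp [cross2]

lemma cross2_self (u w : Fin 2 → ℝ) : cross2 u w w = cross2 u w u := by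
  simp only [cross2_apply]; ring

lemma cross2_sub_self (u w : Fin 2 → ℝ) : cross2 u w (w - u) = 0 := by
  simp only [cross2_apply, Pi.sub_apply]; ring

lemma cross2_ne_zero {u w : Fin 2 → ℝ} (h : u ≠ w) : ∃ z, cross2 u w z ≠ 0 := by
  have : ∃ i, u i ≠ w i := Function.ne_iff.1 h
  obtain ⟨i, hi⟩ := this
  fin_cases i
  · refine ⟨Pi.single 1 1, ?_⟩
    simp only [cross2_apply, Pi.single_eq_same, ne_eq]
    rw [Pi.single_eq_of_ne (by decide)]
    simp only [mul_zero, mul_one, zero_sub, neg_eq_zero, sub_eq_zero]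
    exact fun hc => hi hc.symm
  · refine ⟨Pi.single 0 1, ?_⟩
    simp only [cross2_apply, Pi.single_eq_same, ne_eq]
    rw [Pi.single_eq_of_ne (by decide)]
    simp only [mul_zero, mul_one, sub_zero, sub_eq_zero]
    exact fun hc => hi hc.symm

/-- Two vectors in the kernel of a nonzero functional on ℝ² are dependent. -/
lemma ker_dep (φ : (Fin 2 → ℝ) →L[ℝ] ℝ) (hφ : ∃ z, φ z ≠ 0) {a b : Fin 2 → ℝ}
    (ha : a ≠ 0) (hφa : φ a = 0) (hφb : φ b = 0) : ∃ s : ℝ, b = s • a := by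
  have expand : ∀ v : Fin 2 → ℝ, φ v = v 0 * φ (Pi.single 0 1) + v 1 * φ (Pi.single 1 1) := by
    intro v
    have hv : v = v 0 • (Pi.single 0 (1:ℝ) : Fin 2 → ℝ) + v 1 • (Pi.single 1 (1:ℝ) : Fin 2 → ℝ) := by
      funext i; fin_cases i
      · simp [Pi.single_eq_of_ne (show (1:Fin 2) ≠ 0 by decide)]
      · simp [Pi.single_eq_of_ne (show (0:Fin 2) ≠ 1 by decide)]
    conv_lhs => rw [hv]
    rw [map_add, map_smul, map_smul]; simp [smul_eq_mul]
  set c0 := φ (Pi.single 0 (1:ℝ)) with hc0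
  set c1 := φ (Pi.single 1 (1:ℝ)) with hc1
  have hA : a 0 * c0 + a 1 * c1 = 0 := by rw [← expand]; exact hφa
  have hB : b 0 * c0 + b 1 * c1 = 0 := by rw [← expand]; exact hφb
  have hc : c0 ≠ 0 ∨ c1 ≠ 0 := by
    by_contra hcon; push_neg at hcon
    obtain ⟨z, hz⟩ := hφ
    exact hz (by rw [expand z, hcon.1, hcon.2]; ring)
  have hdet : a 0 * b 1 - a 1 * b 0 = 0 := by
    rcases hc with h | h
    · have : (a 0 * b 1 - a 1 * b 0) * c0 = b 1 * (a 0 * c0 + a 1 * c1)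
          - a 1 * (b 0 * c0 + b 1 * c1) := by ring
      have h2 : (a 0 * b 1 - a 1 * b 0) * c0 = 0 := by rw [this, hA, hB]; ring
      exact (mul_eq_zero.1 h2).resolve_right h
    · have : (a 0 * b 1 - a 1 * b 0) * c1 = a 0 * (b 0 * c0 + b 1 * c1)
          - b 0 * (a 0 * c0 + a 1 * c1) := by ring
      have h2 : (a 0 * b 1 - a 1 * b 0) * c1 = 0 := by rw [this, hA, hB]; ring
      exact (mul_eq_zero.1 h2).resolve_right h
  have ha' : a 0 ≠ 0 ∨ a 1 ≠ 0 := by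
    by_contra hcon; push_neg at hcon
    exact ha (by funext i; fin_cases i <;> simp [hcon.1, hcon.2])
  rcases ha' with h | h
  · refine ⟨b 0 / a 0, ?_⟩
    funext i; fin_cases i
    · simp only [Pi.smul_apply, smul_eq_mul, Fin.zero_eta, Fin.mk_one]; field_simp
    · simp only [Pi.smul_apply, smul_eq_mul, Fin.zero_eta, Fin.mk_one]; field_simp; nlinarith [hdet]
  · refine ⟨b 1 / a 1, ?_⟩
    funext i; fin_cases i
    · simp only [Pi.smul_apply, smul_eq_mul, Fin.zero_eta, Fin.mk_one]; field_simp; nlinarith [hdet]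
    · simp only [Pi.smul_apply, smul_eq_mul, Fin.zero_eta, Fin.mk_one]; field_simp


lemma mem_segment_of_param {P : Set (Fin 2 → ℝ)} {u w : Fin 2 → ℝ}
    (hu : u ∈ Set.extremePoints ℝ P) (hw : w ∈ Set.extremePoints ℝ P) (hne : u ≠ w)
    {z : Fin 2 → ℝ} (hz : z ∈ P) {s : ℝ} (hzs : z - u = s • (w - u)) : z ∈ segment ℝ u w := by
  have hzeq : z = (1 - s) • u + s • w := by
    rw [sub_eq_iff_eq_add] at hzs; rw [hzs]; module
  rcases lt_or_ge s 0 with hs | hs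
  · exfalso
    have h1 : (0:ℝ) < 1 - s := by linarith
    have hmem : u ∈ openSegment ℝ z w := by
      refine ⟨1 / (1 - s), -s / (1 - s), div_pos one_pos h1, div_pos (by linarith) h1, ?_, ?_⟩
      · field_simp; ring
      · rw [hzeq]; match_scalars <;> field_simp <;> ring
    obtain ⟨_, hww⟩ := (mem_extremePoints.1 hu).2 _ hz _ hw.1 hmem
    exact hne hww.symm
  rcases le_or_gt s 1 with hs1 | hs1
  · exact ⟨1 - s, s, by linarith, hs, by ring, hzeq.symm⟩
  · exfalso
    have hs0 : (0:ℝ) < s := by linarith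
    have hmem : w ∈ openSegment ℝ u z := by
      refine ⟨(s - 1) / s, 1 / s, div_pos (by linarith) hs0, div_pos one_pos hs0, ?_, ?_⟩
      · field_simp; ring
      · rw [hzeq]; match_scalars <;> field_simp <;> ring
    obtain ⟨huu, _⟩ := (mem_extremePoints.1 hw).2 _ hu.1 _ hz hmem
    exact hne huu



lemma clm_le_on_hull (φ : (Fin 2 → ℝ) →L[ℝ] ℝ) {s : Set (Fin 2 → ℝ)} {M : ℝ}
    (h : ∀ v ∈ s, φ v ≤ M) : ∀ x ∈ convexHull ℝ s, φ x ≤ M := fun _ hx =>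
  convexHull_min h (convex_halfSpace_le ⟨φ.map_add, fun c x => φ.map_smul c x⟩ M) hx

set_option maxHeartbeats 1000000 in
theorem exists_edge_side {V : Finset (Fin 2 → ℝ)} {P : Set (Fin 2 → ℝ)}
    (hP : P = convexHull ℝ (V : Set (Fin 2 → ℝ)))
    {u : Fin 2 → ℝ} (hu : u ∈ Set.extremePoints ℝ P)
    (g : (Fin 2 → ℝ) →L[ℝ] ℝ)
    (h0 : ∃ v ∈ V, v ≠ u ∧ g v ≤ g u)
    (h1 : ∃ v ∈ V, g u < g v) :
    ∃ b, IsEdge P u b ∧ g u < g b := by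
  subst hP
  set P := convexHull ℝ (V : Set (Fin 2 → ℝ)) with hPdef
  have hPconv : Convex ℝ P := convex_convexHull ℝ _
  have hPcomp : IsCompact P := V.finite_toSet.isCompact_convexHull ℝ
  have huP : u ∈ P := hu.1
  have huV : u ∈ V := by
    have := extremePoints_convexHull_subset hu; exact_mod_cast this
  -- u not in hull of the others
  have hnm : u ∉ convexHull ℝ ((V.erase u : Finset _) : Set (Fin 2 → ℝ)) := by
    intro hmem
    have hsub : P ⊆ convexHull ℝ ((V.erase u : Finset _) : Set (Fin 2 → ℝ)) := by
      apply convexHull_min _ (convex_convexHull ℝ _)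
      intro v hv
      by_cases hvu : v = u
      · exact hvu ▸ hmem
      · exact subset_convexHull ℝ _ (by exact_mod_cast Finset.mem_erase.2 ⟨hvu, hv⟩)
    have hsub2 : convexHull ℝ ((V.erase u : Finset _) : Set (Fin 2 → ℝ)) ⊆ P :=
      convexHull_mono (by exact_mod_cast Finset.erase_subset u V)
    have hEq : P = convexHull ℝ ((V.erase u : Finset _) : Set (Fin 2 → ℝ)) :=
      le_antisymm hsub hsub2
    have : u ∈ ((V.erase u : Finset _) : Set (Fin 2 → ℝ)) :=
      extremePoints_convexHull_subset (hEq ▸ hu)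
    simp at this
  -- separating functional
  obtain ⟨f, r, hfr, hru⟩ := geometric_hahn_banach_closed_point
    (convex_convexHull ℝ _) ((V.erase u).finite_toSet.isClosed_convexHull ℝ) hnm
  have hf : ∀ v ∈ V, v ≠ u → f v < f u := by
    intro v hv hvu
    have : f v < r := hfr v (subset_convexHull ℝ _ (by exact_mod_cast Finset.mem_erase.2 ⟨hvu, hv⟩))
    linarith
  -- minimize ratio over vertices on the far side
  set Vp := V.filter (fun v => g u < g v) with hVp
  have hVpne : Vp.Nonempty := by
    obtain ⟨v, hv, hgv⟩ := h1; exact ⟨v, Finset.mem_filter.2 ⟨hv, hgv⟩⟩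
  obtain ⟨u', hu'Vp, hmin⟩ := Vp.exists_min_image (fun v => (f u - f v) / (g v - g u)) hVpne
  have hu'V : u' ∈ V := (Finset.mem_filter.1 hu'Vp).1
  have hgu' : g u < g u' := (Finset.mem_filter.1 hu'Vp).2
  have hu'u : u' ≠ u := fun h => by rw [h] at hgu'; exact lt_irrefl _ hgu'
  have hfu' : f u' < f u := hf u' hu'V hu'u
  set t : ℝ := (f u - f u') / (g u' - g u) with ht
  have htpos : 0 < t := div_pos (by linarith) (by linarith)
  -- the exposing functional for the edge
  set φ : (Fin 2 → ℝ) →L[ℝ] ℝ := t • g + f with hφdef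
  have hφ_apply : ∀ z, φ z = t * g z + f z := fun z => rfl
  have hkey : ∀ v ∈ V, t * (g v - g u) ≤ f u - f v := by
    intro v hv
    by_cases hvu : v = u
    · subst hvu; simp
    · rcases le_or_gt (g v) (g u) with hgv | hgv
      · have h1' : t * (g v - g u) ≤ 0 := mul_nonpos_of_nonneg_of_nonpos (le_of_lt htpos) (by linarith)
        have := hf v hv hvu; linarith
      · have hineq := hmin v (Finset.mem_filter.2 ⟨hv, hgv⟩)
        rw [ht, div_le_div_iff₀ (by linarith) (by linarith)] at hineq
        rw [ht, div_mul_eq_mul_div, div_le_iff₀ (by linarith : (0:ℝ) < g u' - g u)]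
        nlinarith
  have hφV : ∀ v ∈ V, φ v ≤ φ u := by
    intro v hv; have := hkey v hv; rw [hφ_apply, hφ_apply]; nlinarith
  have hφP : ∀ x ∈ P, φ x ≤ φ u := clm_le_on_hull φ hφV
  have hφu' : φ u' = φ u := by
    rw [hφ_apply, hφ_apply, ht]
    have : (f u - f u') / (g u' - g u) * (g u' - g u) = f u - f u' :=
      div_mul_cancel₀ _ (by linarith)
    nlinarith [this]
  -- φ is nonzero
  have hφne : ∃ z, φ z ≠ 0 := by
    obtain ⟨w0, hw0V, hw0u, hgw0⟩ := h0
    have h1' : φ w0 < φ u := by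
      rw [hφ_apply, hφ_apply]
      have := hf w0 hw0V hw0u
      nlinarith
    exact ⟨u - w0, by rw [map_sub]; intro h; rw [sub_eq_zero] at h; linarith [h1', h.symm ▸ le_refl (φ u)]⟩
  set e : Fin 2 → ℝ := u' - u with he
  have hene : e ≠ 0 := sub_ne_zero.2 hu'u
  have hφe : φ e = 0 := by rw [he, map_sub, hφu', sub_self]
  -- the face F
  set F : Set (Fin 2 → ℝ) := {x ∈ P | φ x = φ u} with hF
  have hFline : ∀ x ∈ F, ∃ s : ℝ, x - u = s • e := by
    rintro x ⟨hxP, hxφ⟩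
    exact ker_dep φ hφne hene hφe (by rw [map_sub, hxφ, sub_self])
    -- coordinate with nonzero e
  obtain ⟨i0, hi0⟩ : ∃ i, e i ≠ 0 := by
    by_contra hcon; push_neg at hcon
    exact hene (funext fun i => hcon i)
  set ψ : (Fin 2 → ℝ) → ℝ := fun x => (x i0 - u i0) / e i0 with hψ
  have hψcont : Continuous ψ := ((continuous_apply i0).sub continuous_const).div_const _
  set T : Set ℝ := {s : ℝ | u + s • e ∈ P} with hT
  have hφaff : ∀ s : ℝ, φ (u + s • e) = φ u := by
    intro s; rw [map_add, map_smul, hφe]; simp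
  have hTF : T = ψ '' F := by
    ext s; constructor
    · intro hs
      refine ⟨u + s • e, ⟨hs, hφaff s⟩, ?_⟩
      simp only [hψ, Pi.add_apply, Pi.smul_apply, smul_eq_mul]
      field_simp; ring
    · rintro ⟨x, hxF, rfl⟩
      obtain ⟨s', hs'⟩ := hFline x hxF
      have hψx : ψ x = s' := by
        have := congrFun hs' i0
        simp only [Pi.sub_apply, Pi.smul_apply, smul_eq_mul] at this
        rw [hψ]; simp only [this]; field_simp
      rw [hψx]
      have hx : u + s' • e = x := by rw [← hs']; abel
      exact Set.mem_setOf_eq ▸ (hx ▸ hxF.1 : u + s' • e ∈ P)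
  have hFcomp : IsCompact F := by
    have : F = P ∩ φ ⁻¹' {φ u} := by
      ext x; simp [hF, Set.mem_preimage]
    rw [this]
    exact hPcomp.inter_right (isClosed_singleton.preimage φ.continuous)
  have hTcomp : IsCompact T := hTF ▸ hFcomp.image hψcont
  have h0T : (0:ℝ) ∈ T := by
    show u + (0:ℝ) • e ∈ P; simpa using huP
  have h1T : (1:ℝ) ∈ T := by
    show u + (1:ℝ) • e ∈ P
    have : u + (1:ℝ) • e = u' := by rw [one_smul, he]; abel
    rw [this]; exact subset_convexHull ℝ _ (by exact_mod_cast hu'V)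
  have hTne : T.Nonempty := ⟨0, h0T⟩
  set τ := sSup T with hτ
  have hτT : τ ∈ T := hTcomp.sSup_mem hTne
  have hτ1 : 1 ≤ τ := le_csSup hTcomp.bddAbove h1T
  have hτpos : 0 < τ := lt_of_lt_of_le one_pos hτ1
  have hTnonneg : ∀ s ∈ T, 0 ≤ s := by
    intro s hs
    by_contra hneg; push_neg at hneg
    have hd : (0:ℝ) < τ - s := by linarith
    have hmem : u ∈ openSegment ℝ (u + s • e) (u + τ • e) := by
      refine ⟨τ / (τ - s), -s / (τ - s), div_pos hτpos hd, div_pos (by linarith) hd, ?_, ?_⟩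
      · field_simp; ring
      · match_scalars <;> (field_simp; ring_nf)
    obtain ⟨h1', _⟩ := (mem_extremePoints.1 hu).2 _ hs _ hτT hmem
    have : s • e = 0 := by
      have := h1'; rwa [add_eq_left] at this
    rcases smul_eq_zero.1 this with h | h
    · exact absurd h (ne_of_lt hneg)
    · exact hene h
  set b := u + τ • e with hb
  have hbP : b ∈ P := hτT
  have hub : u ≠ b := by
    intro h
    have : τ • e = 0 := by
      have := h.symm; rwa [add_eq_left] at this
    rcases smul_eq_zero.1 this with h' | h'
    · exact (ne_of_gt hτpos) h'
    · exact hene h'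
  have hFseg : F = segment ℝ u b := by
    ext x; constructor
    · intro hxF
      obtain ⟨s, hs⟩ := hFline x hxF
      have hxeq : u + s • e = x := by rw [← hs]; abel
      have hsT : s ∈ T := by show u + s • e ∈ P; rw [hxeq]; exact hxF.1
      have hs0 : 0 ≤ s := hTnonneg s hsT
      have hsτ : s ≤ τ := le_csSup hTcomp.bddAbove hsT
      refine ⟨1 - s / τ, s / τ, ?_, by positivity, by ring, ?_⟩
      · have : s / τ ≤ 1 := (div_le_one hτpos).2 hsτ
        linarith
      · rw [← hxeq, hb]; match_scalars <;> (field_simp; try ring)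
    · rintro ⟨a1, a2, ha1, ha2, hsum, rfl⟩
      refine ⟨hPconv huP hbP ha1 ha2 hsum, ?_⟩
      have hφb : φ b = φ u := hφaff τ
      have hexpand : φ (a1 • u + a2 • b) = a1 * φ u + a2 * φ u := by
        rw [map_add, map_smul, map_smul, hφb]; rfl
      rw [hexpand, ← add_mul, hsum, one_mul]
  have hexp : IsExposed ℝ P (segment ℝ u b) := by
    intro _
    refine ⟨φ, ?_⟩
    rw [← hFseg]
    ext x
    simp only [hF, Set.mem_setOf_eq]
    constructor
    · rintro ⟨hxP, hxφ⟩; exact ⟨hxP, fun y hy => (hφP y hy).trans (le_of_eq hxφ.symm)⟩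
    · rintro ⟨hxP, hxall⟩; exact ⟨hxP, le_antisymm (hφP x hxP) (hxall u huP)⟩
  refine ⟨b, ⟨hub, hexp.isExtreme⟩, ?_⟩
  have hgb : g b = g u + τ * (g u' - g u) := by
    rw [hb, map_add, map_smul, he, map_sub]; simp only [smul_eq_mul]
  nlinarith


lemma cross2_swap (u w z : Fin 2 → ℝ) : cross2 w u z = -cross2 u w z := by
  simp only [cross2_apply]; ring

lemma isEdge_of_side {V : Finset (Fin 2 → ℝ)} {P : Set (Fin 2 → ℝ)}
    (hP : P = convexHull ℝ (V : Set (Fin 2 → ℝ)))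
    {u w : Fin 2 → ℝ} (hu : u ∈ Set.extremePoints ℝ P) (hw : w ∈ Set.extremePoints ℝ P)
    (hne : u ≠ w) (hside : ∀ v ∈ V, cross2 u w v ≤ cross2 u w u) : IsEdge P u w := by
  have hgw : cross2 u w w = cross2 u w u := cross2_self u w
  have hgP : ∀ x ∈ P, cross2 u w x ≤ cross2 u w u := by
    rw [hP]; exact clm_le_on_hull _ hside
  have hseg : {x ∈ P | ∀ y ∈ P, cross2 u w y ≤ cross2 u w x} = segment ℝ u w := by
    ext x; constructor
    · rintro ⟨hxP, hxall⟩
      have h1 : cross2 u w x = cross2 u w u := le_antisymm (hgP x hxP) (hxall u hu.1)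
      obtain ⟨s, hs⟩ := ker_dep (cross2 u w) (b := x - u) (cross2_ne_zero hne)
        (sub_ne_zero.2 hne.symm) (cross2_sub_self u w) (by rw [map_sub, h1, sub_self])
      exact mem_segment_of_param hu hw hne hxP hs
    · rintro ⟨a1, a2, ha1, ha2, hsum, rfl⟩
      have hPconv : Convex ℝ P := hP ▸ convex_convexHull ℝ _
      refine ⟨hPconv hu.1 hw.1 ha1 ha2 hsum, ?_⟩
      intro y hy
      have hval : cross2 u w (a1 • u + a2 • w) = cross2 u w u := by
        have : cross2 u w (a1 • u + a2 • w) = a1 * cross2 u w u + a2 * cross2 u w u := by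
          rw [map_add, map_smul, map_smul, hgw]; rfl
        rw [this, ← add_mul, hsum, one_mul]
      rw [hval]; exact hgP y hy
  exact ⟨hne, (show IsExposed ℝ P (segment ℝ u w) from fun _ => ⟨cross2 u w, hseg.symm⟩).isExtreme⟩

end AuxPlane

/-- A 2-polytope in `ℝ^2` that is subequilateral with respect to a norm `N`
is equilateral: the distance between any two distinct vertices equals the diameter. -/
theorem subequilateral_equilateral_dim_two
    (N : (Fin 2 → ℝ) → ℝ) (hN : IsNorm N)
    (V : Finset (Fin 2 → ℝ)) (P : Set (Fin 2 → ℝ))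
    (hP : P = convexHull ℝ (V : Set (Fin 2 → ℝ)))
    (hdim : affineSpan ℝ P = ⊤)
    (hsub : Subequilateral N P) :
    ∀ x ∈ Set.extremePoints ℝ P, ∀ y ∈ Set.extremePoints ℝ P, x ≠ y →
      N (x - y) = polyDiam N P := by
  intro u hu w hw hne
  have huV : u ∈ V := by
    have := extremePoints_convexHull_subset (hP ▸ hu); exact_mod_cast this
  have hwV : w ∈ V := by
    have := extremePoints_convexHull_subset (hP ▸ hw); exact_mod_cast this
  have hVne : V.Nonempty := ⟨u, huV⟩
  have hdiam : ∀ x ∈ P, ∀ y ∈ P, N (x - y) ≤ polyDiam N P := by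
    intro x hx y hy
    rw [hP] at hx hy ⊢
    exact dist_le_polyDiam hN V hVne hx hy
  have hgw : cross2 u w w = cross2 u w u := cross2_self u w
  by_cases hA : ∀ v ∈ V, cross2 u w v ≤ cross2 u w u
  · exact hsub u w (isEdge_of_side hP hu hw hne hA)
  by_cases hB : ∀ v ∈ V, cross2 u w u ≤ cross2 u w v
  · have hedge : IsEdge P w u := by
      apply isEdge_of_side hP hw hu hne.symm
      intro v hv
      have h := hB v hv
      simp only [cross2_apply] at h ⊢
      linarith
    rw [hN.sub_comm]
    exact hsub w u hedge
  push_neg at hA hB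
  obtain ⟨v1, hv1V, hv1⟩ := hA
  obtain ⟨v2, hv2V, hv2⟩ := hB
  -- edge at u towards the positive side of the line uw
  obtain ⟨b1, hedge1, hgb1⟩ := exists_edge_side hP hu (cross2 u w)
    ⟨w, hwV, hne.symm, le_of_eq hgw⟩ ⟨v1, hv1V, hv1⟩
  -- edge at w towards the negative side
  obtain ⟨b2, hedge2, hgb2'⟩ := exists_edge_side hP hw (cross2 w u)
    ⟨u, huV, hne, le_of_eq (by simp only [cross2_apply]; ring)⟩
    ⟨v2, hv2V, by simp only [cross2_apply] at hv2 ⊢; linarith⟩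
  have hgb2 : cross2 u w b2 < cross2 u w u := by
    simp only [cross2_apply] at hgb2' ⊢
    linarith
  have hgb1' : cross2 u w u < cross2 u w b1 := hgb1
  have hb1P : b1 ∈ P := hedge1.2.1 (right_mem_segment ℝ u b1)
  have hb2P : b2 ∈ P := hedge2.2.1 (right_mem_segment ℝ w b2)
  have hPconv : Convex ℝ P := hP ▸ convex_convexHull ℝ _
  set g := cross2 u w with hg
  have hden : 0 < g b1 - g b2 := by simp only [hg]; linarith
  set τ : ℝ := (g b1 - g u) / (g b1 - g b2) with hτ
  have hτ0 : 0 < τ := div_pos (by simp only [hg]; linarith) hden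
  have hτ1 : τ < 1 := (div_lt_one hden).2 (by simp only [hg]; linarith)
  set m := (1 - τ) • b1 + τ • b2 with hm
  have hmP : m ∈ P := hPconv hb1P hb2P (by linarith) (le_of_lt hτ0) (by ring)
  have hgm : g m = g u := by
    have : g m = (1 - τ) * g b1 + τ * g b2 := by
      rw [hm, map_add, map_smul, map_smul]; rfl
    rw [this, hτ]
    field_simp
    ring
  have hmseg : m ∈ segment ℝ u w := by
    obtain ⟨s, hs⟩ := ker_dep g (b := m - u) (cross2_ne_zero hne) (sub_ne_zero.2 hne.symm)
      (cross2_sub_self u w) (by rw [map_sub, hgm, sub_self])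
    exact mem_segment_of_param hu hw hne hmP hs
  obtain ⟨a1, a2, ha1, ha2, hsum, hmeq⟩ := hmseg
  have hE1 : N (u - b1) = polyDiam N P := hsub u b1 hedge1
  have hE2 : N (w - b2) = polyDiam N P := hsub w b2 hedge2
  have hNuw_le : N (u - w) ≤ polyDiam N P := hdiam u hu.1 w hw.1
  have hNb : N (b1 - b2) ≤ polyDiam N P := hdiam b1 hb1P b2 hb2P
  have hum : u - m = a2 • (u - w) := by
    rw [← hmeq]; match_scalars <;> linarith
  have hmw : m - w = a1 • (u - w) := by
    rw [← hmeq]; match_scalars <;> linarith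
  have hmb1 : m - b1 = τ • (b2 - b1) := by rw [hm]; match_scalars <;> ring
  have hmb2 : m - b2 = (1 - τ) • (b1 - b2) := by rw [hm]; match_scalars <;> ring
  have n1 : N (u - m) = a2 * N (u - w) := by
    rw [hum, hN.2.1, abs_of_nonneg ha2]
  have n2 : N (m - w) = a1 * N (u - w) := by
    rw [hmw, hN.2.1, abs_of_nonneg ha1]
  have n3 : N (m - b1) = τ * N (b1 - b2) := by
    rw [hmb1, hN.2.1, abs_of_nonneg (le_of_lt hτ0), hN.sub_comm b2 b1]
  have n4 : N (m - b2) = (1 - τ) * N (b1 - b2) := by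
    rw [hmb2, hN.2.1, abs_of_nonneg (by linarith)]
  have tri1 : N (u - b1) ≤ N (u - m) + N (m - b1) := hN.triangle' u b1 m
  have tri2 : N (w - b2) ≤ N (w - m) + N (m - b2) := hN.triangle' w b2 m
  have hwm : N (w - m) = N (m - w) := hN.sub_comm w m
  have hsumN : a1 * N (u - w) + a2 * N (u - w) = N (u - w) := by
    rw [← add_mul, hsum, one_mul]
  linarith [tri1, tri2]
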